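/- arXiv:2102.11864 — 2 statements merged into one kernel-verified Lean document; each statement's English description precedes it below -/
import Mathlib

section
/- Let G be a star with center vertex v on finite vertex set V in which all vertices have the same color, let X ⊆ V with v ∈ X and Y := V \ X, and let k ≥ 1 and ℓ ≥ 0. Then there exists a partition of V into k nonempty ℓ-fair parts, each inducing a connected subgraph of G and with all vertices of X contained in a single part, if and only if |Y| ≥ k − 1 and |V| − (k − 1) ≤ ℓ. -/
/-- Number of vertices of `W` having color `c`. -/
noncomputable def cv {V C : Type*} (col : V → C) (W : Set V) (c : C) : ℕ :=
  (W ∩ col ⁻¹' {c}).ncard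

/-- Margin of victory of `W`: largest entry of the color-count vector minus the
second-largest entry (over the remaining colors); `|W|` if there is only one color. -/
noncomputable def MOV {V C : Type*} [Fintype C] [DecidableEq C] (col : V → C) (W : Set V) : ℕ :=
  if h : Fintype.card C ≤ 1 then W.ncard
  else
    (Finset.univ.sup fun c => cv col W c) -
      Finset.univ.inf'
        (Finset.univ_nonempty_iff.mpr (Fintype.card_pos_iff.mp (by omega)))
        (fun c => (Finset.univ.erase c).sup fun c' => cv col W c')

lemma mov_eq_ncard {V C : Type*} [Fintype V] [Fintype C] [DecidableEq C]
    (col : V → C) (hcol : ∀ x y : V, col x = col y) (W : Set V) :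
    MOV col W = W.ncard := by
  unfold MOV
  split_ifs with h
  · rfl
  · rcases W.eq_empty_or_nonempty with rfl | ⟨w, hw⟩
    · have hcv : ∀ c, cv col (∅ : Set V) c = 0 := by intro c; simp [cv]
      simp [hcv]
    · set c0 := col w with hc0
      have hcv0 : cv col W c0 = W.ncard := by
        unfold cv
        congr 1
        apply Set.inter_eq_self_of_subset_left
        intro x hx
        simp [hc0, hcol x w]
      have hcvne : ∀ c, c ≠ c0 → cv col W c = 0 := by
        intro c hc
        unfold cv
        convert Set.ncard_empty V
        ext x
        simp only [Set.mem_inter_iff, Set.mem_preimage, Set.mem_singleton_iff,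
          Set.mem_empty_iff_false, iff_false, not_and]
        intro hx hcx
        exact hc (by rw [← hcx, hcol x w])
      have hsup : (Finset.univ.sup fun c => cv col W c) = W.ncard := by
        apply le_antisymm
        · refine Finset.sup_le fun c _ => ?_
          unfold cv
          exact Set.ncard_le_ncard Set.inter_subset_left W.toFinite
        · exact hcv0 ▸ Finset.le_sup (Finset.mem_univ c0)
      rw [hsup]
      have hinf : (Finset.univ.inf'
          (Finset.univ_nonempty_iff.mpr (Fintype.card_pos_iff.mp (by omega)))
          fun c => (Finset.univ.erase c).sup fun c' => cv col W c') = 0 := by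
        apply Nat.le_zero.mp
        refine le_trans (Finset.inf'_le _ (Finset.mem_univ c0)) ?_
        exact Finset.sup_le fun c hc => le_of_eq (hcvne c (Finset.ne_of_mem_erase hc))
      rw [hinf]
      omega

lemma star_connected {V : Type*} (G : SimpleGraph V) (v : V)
    (hstar : ∀ a b : V, G.Adj a b ↔ (a ≠ b ∧ (a = v ∨ b = v)))
    (S : Set V) (hv : v ∈ S) : (G.induce S).Connected := by
  rw [SimpleGraph.connected_iff]
  refine ⟨fun a b => ?_, ⟨⟨v, hv⟩⟩⟩
  have key : ∀ x : S, (G.induce S).Reachable x ⟨v, hv⟩ := by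
    intro x
    by_cases hx : (x : V) = v
    · have hxe : x = (⟨v, hv⟩ : S) := Subtype.ext hx
      rw [hxe]
    · exact SimpleGraph.Adj.reachable ((hstar (x : V) v).mpr ⟨hx, Or.inr rfl⟩)
  exact (key a).trans (key b).symm

lemma singleton_connected {V : Type*} (G : SimpleGraph V) (y : V) :
    (G.induce {y}).Connected := by
  rw [SimpleGraph.connected_iff]
  refine ⟨fun a b => ?_, ⟨⟨y, rfl⟩⟩⟩
  have : a = b := Subtype.ext (a.2.trans b.2.symm)
  rw [this]

lemma star_induce_singleton {V : Type*} (G : SimpleGraph V) (v : V)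
    (hstar : ∀ a b : V, G.Adj a b ↔ (a ≠ b ∧ (a = v ∨ b = v)))
    (S : Set V) (hv : v ∉ S) (hconn : (G.induce S).Connected) :
    ∃ y, S = {y} := by
  obtain ⟨a⟩ := hconn.nonempty
  have hbot : G.induce S = ⊥ := by
    ext x y
    simp only [SimpleGraph.comap_adj, Function.Embedding.coe_subtype, SimpleGraph.bot_adj,
      iff_false]
    intro hxy
    rcases ((hstar _ _).mp hxy).2 with h | h
    · exact hv (h ▸ x.2)
    · exact hv (h ▸ y.2)
  refine ⟨(a : V), ?_⟩
  apply Set.eq_singleton_iff_unique_mem.mpr ⟨a.2, fun b hb => ?_⟩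
  have := hconn.preconnected ⟨b, hb⟩ a
  rw [hbot, SimpleGraph.reachable_bot] at this
  exact congrArg Subtype.val this

theorem stmt11 {V C : Type*} [Fintype V] [Fintype C] [DecidableEq C]
    (G : SimpleGraph V) (v : V)
    (hstar : ∀ a b : V, G.Adj a b ↔ (a ≠ b ∧ (a = v ∨ b = v)))
    (col : V → C) (hcol : ∀ x y : V, col x = col y)
    (X : Set V) (hvX : v ∈ X)
    (k ℓ : ℕ) (hk : 1 ≤ k) :
    (∃ P : Fin k → Set V,
        (∀ i, (P i).Nonempty) ∧
        (∀ i j, i ≠ j → Disjoint (P i) (P j)) ∧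
        (⋃ i, P i) = Set.univ ∧
        (∀ i, (G.induce (P i)).Connected) ∧
        (∀ i, MOV col (P i) ≤ ℓ) ∧
        (∃ i, X ⊆ P i)) ↔
      (k - 1 ≤ Xᶜ.ncard ∧ Fintype.card V - (k - 1) ≤ ℓ) := by
  constructor
  · rintro ⟨P, hne, hdisj, huniv, hconn, hfair, i0, hX⟩
    have hv0 : v ∈ P i0 := hX hvX
    have hsingle : ∀ j : {j : Fin k // j ≠ i0}, ∃ y, P j = {y} ∧ y ∈ Xᶜ := by
      rintro ⟨j, hj⟩
      have hvj : v ∉ P j := fun hv' => Set.disjoint_left.mp (hdisj j i0 hj) hv' hv0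
      obtain ⟨y, hy⟩ := star_induce_singleton G v hstar (P j) hvj (hconn j)
      refine ⟨y, hy, fun hyX => ?_⟩
      exact Set.disjoint_left.mp (hdisj j i0 hj) (hy ▸ rfl) (hX hyX)
    choose e he heX using hsingle
    have hmem : ∀ j : {j : Fin k // j ≠ i0}, e j ∈ P j.1 := fun j => (he j) ▸ rfl
    have hinj : Function.Injective e := by
      intro j1 j2 hj
      by_contra hne'
      exact Set.disjoint_left.mp (hdisj j1 j2 (fun h => hne' (Subtype.ext h)))
        (hmem j1) (hj ▸ hmem j2)
    have hrange : Set.range e = (P i0)ᶜ := by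
      ext x
      simp only [Set.mem_range, Set.mem_compl_iff]
      constructor
      · rintro ⟨j, rfl⟩
        exact fun hx => Set.disjoint_left.mp (hdisj j i0 j.2) (hmem j) hx
      · intro hx
        have : x ∈ ⋃ i, P i := huniv ▸ Set.mem_univ x
        obtain ⟨j, hj⟩ := Set.mem_iUnion.mp this
        have hji : j ≠ i0 := fun h => hx (h ▸ hj)
        refine ⟨⟨j, hji⟩, ?_⟩
        have := he ⟨j, hji⟩ ▸ hj
        exact this.symm
    have hcard : Fintype.card {j : Fin k // j ≠ i0} = k - 1 := by
      have := Fintype.card_subtype_compl (fun j : Fin k => j = i0)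
      simp only [Fintype.card_subtype_eq, Fintype.card_fin] at this
      exact this
    have hrc : (Set.range e).ncard = k - 1 := by
      rw [← Set.image_univ, Set.ncard_image_of_injective _ hinj, Set.ncard_univ,
        Nat.card_eq_fintype_card, hcard]
    have hsubX : Set.range e ⊆ Xᶜ := by rintro x ⟨j, rfl⟩; exact heX j
    have h1 : k - 1 ≤ Xᶜ.ncard := hrc ▸ Set.ncard_le_ncard hsubX (Set.toFinite _)
    have h2 : (P i0).ncard + (P i0)ᶜ.ncard = Nat.card V :=
      Set.ncard_add_ncard_compl _ (Set.toFinite _) (Set.toFinite _)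
    have h3 : (P i0).ncard ≤ ℓ := mov_eq_ncard col hcol (P i0) ▸ hfair i0
    rw [Nat.card_eq_fintype_card] at h2
    rw [← hrange] at h2
    exact ⟨h1, by omega⟩
  · rintro ⟨hY, hl⟩
    obtain ⟨S, hSX, hScard⟩ := Set.exists_subset_card_eq hY
    have hSfin : S.Finite := Set.toFinite _
    haveI := hSfin.fintype
    have hScard' : Fintype.card S = k - 1 := by
      rw [← Nat.card_eq_fintype_card, Nat.card_coe_set_eq, hScard]
    let eq := Fintype.equivFinOfCardEq hScard'
    set g : Fin (k - 1) → V := fun j => ((eq.symm j : S) : V) with hg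
    have hginj : Function.Injective g :=
      Subtype.coe_injective.comp (eq.symm.injective)
    have hgS : ∀ j, g j ∈ S := fun j => (eq.symm j).2
    have hgX : ∀ j, g j ∈ Xᶜ := fun j => hSX (hgS j)
    have hvR : v ∉ Set.range g := by rintro ⟨j, hj⟩; exact hgX j (hj ▸ hvX)
    have hRc : (Set.range g).ncard = k - 1 := by
      rw [← Set.image_univ, Set.ncard_image_of_injective _ hginj, Set.ncard_univ,
        Nat.card_eq_fintype_card, Fintype.card_fin]
    set P : Fin k → Set V := fun i =>
      if h : i.val = 0 then (Set.range g)ᶜ else {g ⟨i.val - 1, by have := i.isLt; omega⟩}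
      with hP
    have hl1 : 1 ≤ ℓ := by
      have hXne : 1 ≤ X.ncard := (Set.ncard_pos (Set.toFinite _)).mpr ⟨v, hvX⟩
      have hXc : X.ncard + Xᶜ.ncard = Nat.card V :=
        Set.ncard_add_ncard_compl _ (Set.toFinite _) (Set.toFinite _)
      rw [Nat.card_eq_fintype_card] at hXc
      omega
    refine ⟨P, ?_, ?_, ?_, ?_, ?_, ?_⟩
    · intro i
      by_cases h : i.val = 0
      · exact ⟨v, by simp only [hP, dif_pos h]; exact hvR⟩
      · exact ⟨_, by simp only [hP, dif_neg h]; exact rfl⟩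
    · intro i j hij
      by_cases hi : i.val = 0 <;> by_cases hj : j.val = 0
      · exact absurd (Fin.ext (hi.trans hj.symm)) hij
      · simp only [hP, dif_pos hi, dif_neg hj]
        exact Set.disjoint_left.mpr (fun x hx hx' => hx (hx' ▸ Set.mem_range_self _))
      · simp only [hP, dif_neg hi, dif_pos hj]
        exact Set.disjoint_right.mpr (fun x hx hx' => hx (hx' ▸ Set.mem_range_self _))
      · simp only [hP, dif_neg hi, dif_neg hj]
        rw [Set.disjoint_singleton]
        intro h
        have := hginj h
        have hval : i.val - 1 = j.val - 1 := congrArg Fin.val this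
        exact hij (Fin.ext (by omega))
    · apply Set.eq_univ_of_forall
      intro x
      rw [Set.mem_iUnion]
      by_cases hx : x ∈ Set.range g
      · obtain ⟨j, hj⟩ := hx
        refine ⟨⟨j.val + 1, by have := j.isLt; omega⟩, ?_⟩
        have hne0 : (j.val + 1) ≠ 0 := Nat.succ_ne_zero _
        simp only [hP, dif_neg hne0]
        have : (⟨j.val + 1 - 1, by have := j.isLt; omega⟩ : Fin (k - 1)) = j :=
          Fin.ext (by simp)
        rw [this, ← hj]
        rfl
      · exact ⟨⟨0, hk⟩, by simp only [hP, dif_pos rfl]; exact hx⟩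
    · intro i
      by_cases h : i.val = 0
      · have hPi : P i = (Set.range g)ᶜ := by simp only [hP]; rw [dif_pos h]
        rw [hPi]
        exact star_connected G v hstar _ hvR
      · have hPi : P i = {g ⟨i.val - 1, by have := i.isLt; omega⟩} := by
          simp only [hP]; rw [dif_neg h]
        rw [hPi]
        exact singleton_connected G _
    · intro i
      rw [mov_eq_ncard col hcol]
      by_cases h : i.val = 0
      · simp only [hP, dif_pos h]
        have h2 : (Set.range g).ncard + (Set.range g)ᶜ.ncard = Nat.card V :=
          Set.ncard_add_ncard_compl _ (Set.toFinite _) (Set.toFinite _)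
        rw [Nat.card_eq_fintype_card] at h2
        omega
      · simp only [hP, dif_neg h, Set.ncard_singleton]
        exact hl1
    · refine ⟨⟨0, hk⟩, ?_⟩
      simp only [hP, dif_pos rfl]
      intro x hx hx'
      obtain ⟨j, hj⟩ := hx'
      exact hgX j (hj ▸ hx)
end

section
/- Let V be a finite set with coloring col : V → C, let ℓ ≥ 1, and let S' ⊆ S ⊆ V be such that both S and S' are ℓ-fair. Then for every integer m with |S'| ≤ m ≤ |S| there exists a set T with S' ⊆ T ⊆ S, |T| = m, and T ℓ-fair. -/
lemma cv_insert {V C : Type*} [DecidableEq C] (col : V → C) (W : Set V) (v : V) (hv : v ∉ W) (c : C)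
    (hW : W.Finite) :
    cv col (insert v W) c = cv col W c + (if col v = c then 1 else 0) := by
  unfold cv
  split_ifs with h
  · rw [Set.insert_inter_of_mem (by simp [h]),
      Set.ncard_insert_of_notMem (by simp [hv]) (hW.inter_of_left _)]
  · rw [Set.insert_inter_of_notMem (by simp [h]), add_zero]

lemma cv_mono {V C : Type*} (col : V → C) {W W' : Set V} (h : W ⊆ W') (hW' : W'.Finite) (c : C) :
    cv col W c ≤ cv col W' c :=
  Set.ncard_le_ncard (Set.inter_subset_inter_left _ h) (hW'.inter_of_left _)

lemma mov_le_iff {V C : Type*} [Fintype C] [DecidableEq C] (col : V → C) (W : Set V)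
    (hC : 1 < Fintype.card C) (ℓ : ℕ) :
    MOV col W ≤ ℓ ↔ ∀ c, cv col W c ≤ ℓ + (Finset.univ.erase c).sup (cv col W) := by
  have hC' : ¬ Fintype.card C ≤ 1 := by omega
  have hne : (Finset.univ : Finset C).Nonempty :=
    Finset.univ_nonempty_iff.mpr (Fintype.card_pos_iff.mp (by omega))
  rw [MOV, dif_neg hC', tsub_le_iff_right]
  show Finset.univ.sup (cv col W) ≤
      ℓ + Finset.univ.inf' hne (fun c => (Finset.univ.erase c).sup (cv col W)) ↔ _
  constructor
  · intro h c
    calc cv col W c ≤ Finset.univ.sup (cv col W) := Finset.le_sup (Finset.mem_univ c)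
      _ ≤ ℓ + Finset.univ.inf' hne (fun c => (Finset.univ.erase c).sup (cv col W)) := h
      _ ≤ ℓ + (Finset.univ.erase c).sup (cv col W) := by
          gcongr
          exact Finset.inf'_le _ (Finset.mem_univ c)
  · intro h
    obtain ⟨c', -, hc'⟩ := Finset.exists_mem_eq_inf' hne
      (fun c => (Finset.univ.erase c).sup (cv col W))
    rw [hc']
    obtain ⟨c0, -, hc0⟩ := Finset.exists_mem_eq_sup Finset.univ hne (cv col W)
    rw [hc0]
    by_cases hcc : c0 = c'
    · subst hcc; exact h c0
    · exact le_trans (Finset.le_sup (Finset.mem_erase.mpr ⟨hcc, Finset.mem_univ _⟩))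
        (Nat.le_add_left _ _)

theorem stmt13 {V C : Type*} [Fintype V] [Fintype C] [DecidableEq C]
    (col : V → C) (ℓ : ℕ) (hℓ : 1 ≤ ℓ)
    (S' S : Set V) (hsub : S' ⊆ S)
    (hS : MOV col S ≤ ℓ) (hS' : MOV col S' ≤ ℓ)
    (m : ℕ) (hm1 : S'.ncard ≤ m) (hm2 : m ≤ S.ncard) :
    ∃ T : Set V, S' ⊆ T ∧ T ⊆ S ∧ T.ncard = m ∧ MOV col T ≤ ℓ := by
  by_cases hC : Fintype.card C ≤ 1
  · obtain ⟨T, h1, h2, h3⟩ := Set.exists_subsuperset_card_eq hsub hm1 hm2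
    refine ⟨T, h1, h2, h3, ?_⟩
    rw [MOV, dif_pos hC] at hS ⊢
    omega
  · push_neg at hC
    induction m, hm1 using Nat.le_induction with
    | base => exact ⟨S', subset_rfl, hsub, rfl, hS'⟩
    | succ m hm ih =>
      obtain ⟨T, hT1, hT2, hT3, hT4⟩ := ih (by omega)
      -- get a vertex of S \ T
      have hTS : T ≠ S := fun h => by simp [h] at hT3; omega
      obtain ⟨v0, hv0S, hv0T⟩ := Set.exists_of_ssubset (ssubset_of_subset_of_ne hT2 hTS)
      have hfair := (mov_le_iff col T hC ℓ).mp hT4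
      have key : ∃ v, v ∈ S ∧ v ∉ T ∧
          cv col T (col v) < ℓ + (Finset.univ.erase (col v)).sup (cv col T) := by
        by_contra hbad
        push_neg at hbad
        -- every vertex of S \ T has "bad" color, all equal to col v0
        have hbadeq : ∀ v, v ∈ S → v ∉ T →
            cv col T (col v) = ℓ + (Finset.univ.erase (col v)).sup (cv col T) := fun v h1 h2 =>
          le_antisymm (hfair _) (hbad v h1 h2)
        have hcol : ∀ v, v ∈ S → v ∉ T → col v = col v0 := by
          intro v h1 h2
          by_contra hne
          have h3 := hbadeq v h1 h2
          have h4 := hbadeq v0 hv0S hv0T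
          have h5 : cv col T (col v) ≤ (Finset.univ.erase (col v0)).sup (cv col T) :=
            Finset.le_sup (Finset.mem_erase.mpr ⟨hne, Finset.mem_univ _⟩)
          have h6 : cv col T (col v0) ≤ (Finset.univ.erase (col v)).sup (cv col T) :=
            Finset.le_sup (Finset.mem_erase.mpr ⟨fun h => hne h.symm, Finset.mem_univ _⟩)
          omega
        -- S ∩ col⁻¹ {c} = T ∩ col⁻¹ {c} for c ≠ col v0
        have hSc : ∀ c, c ≠ col v0 → cv col S c = cv col T c := by
          intro c hc
          unfold cv
          congr 1
          ext x
          simp only [Set.mem_inter_iff, Set.mem_preimage, Set.mem_singleton_iff]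
          constructor
          · rintro ⟨hx1, hx2⟩
            refine ⟨?_, hx2⟩
            by_contra hx3
            exact hc (hx2 ▸ hcol x hx1 hx3)
          · rintro ⟨hx1, hx2⟩
            exact ⟨hT2 hx1, hx2⟩
        have hgrow : cv col T (col v0) + 1 ≤ cv col S (col v0) := by
          have : cv col (insert v0 T) (col v0) = cv col T (col v0) + 1 := by
            rw [cv_insert col T v0 hv0T (col v0) (Set.toFinite T)]
            simp
          rw [← this]
          exact cv_mono col (Set.insert_subset hv0S hT2) (Set.toFinite S) (col v0)
        have hsupeq : (Finset.univ.erase (col v0)).sup (cv col S)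
            = (Finset.univ.erase (col v0)).sup (cv col T) := by
          apply Finset.sup_congr rfl
          intro c hc
          exact hSc c (Finset.mem_erase.mp hc).1
        have hSfair := (mov_le_iff col S hC ℓ).mp hS (col v0)
        have h4 := hbadeq v0 hv0S hv0T
        rw [hsupeq] at hSfair
        omega
      obtain ⟨v, hvS, hvT, hvlt⟩ := key
      refine ⟨insert v T, hT1.trans (Set.subset_insert _ _), Set.insert_subset hvS hT2,
        by rw [Set.ncard_insert_of_notMem hvT (Set.toFinite T), hT3], ?_⟩
      rw [mov_le_iff col _ hC ℓ]
      intro c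
      have hsup : ∀ c, (Finset.univ.erase c).sup (cv col T)
          ≤ (Finset.univ.erase c).sup (cv col (insert v T)) :=
        fun c => Finset.sup_mono_fun fun c' _ =>
          cv_mono col (Set.subset_insert _ _) (Set.toFinite _) c'
      rw [cv_insert col T v hvT c (Set.toFinite T)]
      split_ifs with h
      · subst h
        have := hsup (col v)
        omega
      · have := hfair c
        have := hsup c
        omega
end
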